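/- Kummer's summation: ₂F₁(-m, 2α+2; 2α+m+3; -1) = (2α+3)_m/(α+2)_m, where m is a nonnegative integer, i.e., Σ_{j=0}^{m} ((-m)_j(2α+2)_j)/(j!(2α+m+3)_j)·(-1)^j = (2α+3)_m/(α+2)_m. -/
import Mathlib


open Finset

/-- Pochhammer symbol `(a)_k = a(a+1)⋯(a+k-1)`. -/
noncomputable def poch (a : ℝ) (k : ℕ) : ℝ := ∏ i ∈ Finset.range k, (a + i)

lemma poch_zero (a : ℝ) : poch a 0 = 1 := by simp [poch]

lemma poch_succ (a : ℝ) (k : ℕ) : poch a (k + 1) = poch a k * (a + k) :=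
  Finset.prod_range_succ _ _

lemma poch_succ' (a : ℝ) (k : ℕ) : poch a (k + 1) = a * poch (a + 1) k := by
  induction k with
  | zero => simp [poch]
  | succ n ih =>
    rw [poch_succ, ih, poch_succ]
    push_cast
    ring

lemma poch_pos {a : ℝ} (ha : 0 < a) (k : ℕ) : 0 < poch a k :=
  Finset.prod_pos (fun i _ => by positivity)

lemma poch_neg_eq_zero (m k : ℕ) (h : m < k) : poch (-(m : ℝ)) k = 0 := by
  apply Finset.prod_eq_zero (Finset.mem_range.mpr h)
  simp

/-- The WZ certificate function. -/
noncomputable def Gaux (b : ℝ) (m j : ℕ) : ℝ :=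
  -((j : ℝ) * (b + m + 1 + j)) / (2 * (m + 1)) *
    (poch (-(m : ℝ) - 1) j * poch b j / ((j.factorial : ℝ) * poch (b + m + 2) j) * (-1 : ℝ) ^ j)

lemma local_id (b : ℝ) (hb : 0 < b) (m j : ℕ) :
    (b / 2 + m + 1) *
        (poch (-(m : ℝ) - 1) j * poch b j / ((j.factorial : ℝ) * poch (b + m + 2) j) * (-1 : ℝ) ^ j)
      - (b + m + 1) *
        (poch (-(m : ℝ)) j * poch b j / ((j.factorial : ℝ) * poch (b + m + 1) j) * (-1 : ℝ) ^ j)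
      = Gaux b m (j + 1) - Gaux b m j := by
  have hD : 0 < poch (b + m + 2) j := poch_pos (by positivity) j
  have hB : 0 < poch b j := poch_pos hb j
  have hf : ((j.factorial : ℝ)) ≠ 0 := Nat.cast_ne_zero.mpr j.factorial_ne_zero
  have hden : (0:ℝ) < b + m + 1 + j := by positivity
  have hm1 : ((m:ℝ) + 1) ≠ 0 := by positivity
  have hC : poch (b + m + 1) j = (b + m + 1) * poch (b + m + 2) j / (b + m + 1 + j) := by
    have h1 : poch (b + m + 1) (j + 1) = poch (b + m + 1) j * (b + m + 1 + j) :=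
      poch_succ _ _
    have h2 : poch (b + m + 1) (j + 1) = (b + m + 1) * poch (b + m + 2) j := by
      rw [poch_succ']
      ring_nf
    field_simp
    linarith [h1.symm.trans h2]
  have hA : poch (-(m : ℝ)) j = poch (-(m : ℝ) - 1) j * ((j : ℝ) - m - 1) / (-(m : ℝ) - 1) := by
    have h1 : poch (-(m : ℝ) - 1) (j + 1) = poch (-(m : ℝ) - 1) j * (-(m : ℝ) - 1 + j) :=
      poch_succ _ _
    have h2 : poch (-(m : ℝ) - 1) (j + 1) = (-(m : ℝ) - 1) * poch (-(m : ℝ)) j := by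
      rw [poch_succ']
      ring_nf
    have hne : (-(m : ℝ) - 1) ≠ 0 := by
      intro h; apply hm1; linarith
    field_simp
    nlinarith [h1.symm.trans h2]
  rw [hC, hA]
  unfold Gaux
  rw [poch_succ (-(m:ℝ) - 1) j, poch_succ b j, poch_succ (b + m + 2) j]
  rw [Nat.factorial_succ]
  push_cast
  rw [pow_succ]
  have hne : (-(m : ℝ) - 1) ≠ 0 := by intro h; apply hm1; linarith
  have hj1 : ((j:ℝ) + 1) ≠ 0 := by positivity
  field_simp
  ring

lemma key (b : ℝ) (hb : 0 < b) (m : ℕ) :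
    ∑ j ∈ Finset.range (m + 1),
        poch (-(m : ℝ)) j * poch b j / ((j.factorial : ℝ) * poch (b + m + 1) j) * (-1 : ℝ) ^ j
      = poch (b + 1) m / poch (b / 2 + 1) m := by
  induction m with
  | zero => simp [poch]
  | succ m ih =>
    -- telescoping: sum of local_id over range (m+2)
    have tele :
        (b / 2 + m + 1) * (∑ j ∈ Finset.range (m + 2),
            poch (-(m : ℝ) - 1) j * poch b j / ((j.factorial : ℝ) * poch (b + m + 2) j) * (-1 : ℝ) ^ j)
        - (b + m + 1) * (∑ j ∈ Finset.range (m + 2),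
            poch (-(m : ℝ)) j * poch b j / ((j.factorial : ℝ) * poch (b + m + 1) j) * (-1 : ℝ) ^ j)
        = Gaux b m (m + 2) - Gaux b m 0 := by
      rw [← Finset.sum_range_sub (Gaux b m) (m + 2)]
      rw [Finset.mul_sum, Finset.mul_sum, ← Finset.sum_sub_distrib]
      exact Finset.sum_congr rfl fun j _ => local_id b hb m j
    have hG0 : Gaux b m 0 = 0 := by simp [Gaux]
    have hGend : Gaux b m (m + 2) = 0 := by
      have : poch (-(m : ℝ) - 1) (m + 2) = 0 := by
        have h : poch (-((m+1 : ℕ) : ℝ)) ((m + 1) + 1) = 0 :=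
          poch_neg_eq_zero (m+1) (m+2) (by omega)
        push_cast at h
        convert h using 2
        ring
      simp [Gaux, this]
    -- the m-sum over range (m+2) equals the one over range (m+1), last term vanishes
    have hlast : poch (-(m : ℝ)) (m + 1) = 0 := poch_neg_eq_zero m (m+1) (by omega)
    have hsum2 :
        (∑ j ∈ Finset.range (m + 2),
            poch (-(m : ℝ)) j * poch b j / ((j.factorial : ℝ) * poch (b + m + 1) j) * (-1 : ℝ) ^ j)
        = ∑ j ∈ Finset.range (m + 1),
            poch (-(m : ℝ)) j * poch b j / ((j.factorial : ℝ) * poch (b + m + 1) j) * (-1 : ℝ) ^ j := by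
      rw [Finset.sum_range_succ, hlast]
      simp
    rw [hG0, hGend, hsum2, ih, sub_zero] at tele
    -- now conclude
    have hpos : (0:ℝ) < b / 2 + m + 1 := by positivity
    have hq : 0 < poch (b / 2 + 1) m := poch_pos (by positivity) m
    have hq2 : 0 < poch (b / 2 + 1) (m + 1) := poch_pos (by positivity) (m+1)
    have hrec1 : poch (b + 1) (m + 1) = poch (b + 1) m * (b + 1 + m) := poch_succ _ _
    have hrec2 : poch (b / 2 + 1) (m + 1) = poch (b / 2 + 1) m * (b / 2 + 1 + m) := poch_succ _ _
    have goal_eq :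
        ∑ j ∈ Finset.range (m + 1 + 1),
            poch (-((m+1 : ℕ) : ℝ)) j * poch b j /
              ((j.factorial : ℝ) * poch (b + (m+1 : ℕ) + 1) j) * (-1 : ℝ) ^ j
        = ∑ j ∈ Finset.range (m + 2),
            poch (-(m : ℝ) - 1) j * poch b j / ((j.factorial : ℝ) * poch (b + m + 2) j) * (-1 : ℝ) ^ j := by
      apply Finset.sum_congr rfl
      intro j _
      have e1 : -((m+1 : ℕ) : ℝ) = -(m : ℝ) - 1 := by push_cast; ring
      have e2 : b + ((m+1 : ℕ) : ℝ) + 1 = b + m + 2 := by push_cast; ring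
      rw [e1, e2]
    rw [goal_eq]
    have hsolve :
        (∑ j ∈ Finset.range (m + 2),
            poch (-(m : ℝ) - 1) j * poch b j / ((j.factorial : ℝ) * poch (b + m + 2) j) * (-1 : ℝ) ^ j)
        = (b + m + 1) * (poch (b + 1) m / poch (b / 2 + 1) m) / (b / 2 + m + 1) := by
      rw [eq_div_iff (ne_of_gt hpos)]
      linarith [tele]
    rw [hsolve, hrec1, hrec2]
    field_simp
    ring

/-- Kummer's summation for the terminating ₂F₁ at argument -1:
`₂F₁(-m, 2α+2; 2α+m+3; -1) = (2α+3)_m / (α+2)_m`. -/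
theorem kummer_summation (m : ℕ) (α : ℝ) (hα : α > -1) :
    ∑ j ∈ Finset.range (m + 1),
        poch (-(m : ℝ)) j * poch (2 * α + 2) j
          / ((j.factorial : ℝ) * poch (2 * α + m + 3) j) * (-1 : ℝ) ^ j
      = poch (2 * α + 3) m / poch (α + 2) m := by
  have h := key (2 * α + 2) (by linarith) m
  rw [show (2 * α + 2) / 2 + 1 = α + 2 by ring, show 2 * α + 2 + 1 = 2 * α + 3 by ring] at h
  rw [show 2 * α + 2 + (m : ℝ) + 1 = 2 * α + (m : ℝ) + 3 from by ring] at h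
  exact h
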